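/- Let Q_1, …, Q_N be d×d Hermitian unitary complex matrices such that every pair Q_i, Q_j either commutes or anticommutes, let p_1, …, p_N ∈ [0, 1/2), γ_i = 1/(1 − 2p_i), and let ρ and O be arbitrary d×d complex matrices. For σ ∈ {−1, +1}^N let w(σ) = ∏_{i=1}^{N} w_i(σ_i) with w_i(+1) = 1 − p_i and w_i(−1) = p_i, let C_σ be the composition of the conjugation maps A ↦ Q_i A Q_i over all i with σ_i = −1 (in increasing order of i), and let 𝒩 = N_{Q_N,p_N} ∘ ⋯ ∘ N_{Q_1,p_1} where N_{Q_i,p_i}(A) = (1 − p_i) A + p_i Q_i A Q_i. Then ∑_{σ ∈ {−1,+1}^N} w(σ) · (∏_{i=1}^{N} γ_i σ_i) · Tr(ρ · C_σ(𝒩(O))) = Tr(ρ O). That is, the probabilistic error cancellation estimator is an unbiased estimator of the ideal (noiseless) expectation value. -/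

import Mathlib

open Matrix

section Aux

variable {d : ℕ}

private lemma sum_piFinset_succ {n : ℕ} (t : Finset ℝ) (f : (Fin (n+1) → ℝ) → ℂ) :
    ∑ σ ∈ Fintype.piFinset (fun _ : Fin (n+1) => t), f σ
    = ∑ s ∈ t, ∑ τ ∈ Fintype.piFinset (fun _ : Fin n => t), f (Fin.cons s τ) := by
  rw [← Finset.sum_product']
  refine Finset.sum_nbij' (i := fun σ => (σ 0, Fin.tail σ))
    (j := fun x => Fin.cons x.1 x.2) ?_ ?_ ?_ ?_ ?_
  · intro σ hσ
    simp only [Fintype.mem_piFinset] at hσ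
    simp [Finset.mem_product, Fintype.mem_piFinset, Fin.tail, hσ]
  · intro x hx
    simp only [Finset.mem_product, Fintype.mem_piFinset] at hx
    simp only [Fintype.mem_piFinset]
    intro a
    refine Fin.cases ?_ ?_ a
    · simpa using hx.1
    · intro i; simpa using hx.2 i
  · intro σ _; exact Fin.cons_self_tail σ
  · intro x _; simp
  · intro σ _; rw [Fin.cons_self_tail]

private lemma conj_conj_comm (Qi Qj : Matrix (Fin d) (Fin d) ℂ)
    (h : Qi * Qj = Qj * Qi ∨ Qi * Qj = -(Qj * Qi)) (A : Matrix (Fin d) (Fin d) ℂ) :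
    Qi * (Qj * A * Qj) * Qi = Qj * (Qi * A * Qi) * Qj := by
  have e1 : Qi * (Qj * A * Qj) * Qi = (Qi * Qj) * A * (Qj * Qi) := by noncomm_ring
  have e2 : Qj * (Qi * A * Qi) * Qj = (Qj * Qi) * A * (Qi * Qj) := by noncomm_ring
  rcases h with h | h
  · rw [e1, e2, h]
  · have h' : Qj * Qi = -(Qi * Qj) := by rw [h, neg_neg]
    rw [e1, e2, h, h']
    noncomm_ring

/-- Conjugation by `Qi` commutes with a noise step. -/
private lemma conj_step_comm (Qi Qj : Matrix (Fin d) (Fin d) ℂ) (c : ℂ)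
    (h : Qi * Qj = Qj * Qi ∨ Qi * Qj = -(Qj * Qi)) (A : Matrix (Fin d) (Fin d) ℂ) :
    Qi * ((1 - c) • A + c • (Qj * A * Qj)) * Qi
      = (1 - c) • (Qi * A * Qi) + c • (Qj * (Qi * A * Qi) * Qj) := by
  rw [← conj_conj_comm Qi Qj h A]
  simp [Matrix.add_mul, Matrix.mul_add, Matrix.mul_smul, Matrix.smul_mul, mul_assoc]

private lemma conj_foldl_comm {N : ℕ} (Q : Fin N → Matrix (Fin d) (Fin d) ℂ)
    (p : Fin N → ℝ) (Qi : Matrix (Fin d) (Fin d) ℂ)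
    (h : ∀ j, Qi * Q j = Q j * Qi ∨ Qi * Q j = -(Q j * Qi)) :
    ∀ (l : List (Fin N)) (A : Matrix (Fin d) (Fin d) ℂ),
      l.foldl (fun A i => (1 - (p i : ℂ)) • A + (p i : ℂ) • (Q i * A * Q i)) (Qi * A * Qi)
      = Qi * (l.foldl (fun A i => (1 - (p i : ℂ)) • A + (p i : ℂ) • (Q i * A * Q i)) A) * Qi := by
  intro l
  induction l with
  | nil => intro A; simp
  | cons j l ih =>
    intro A
    simp only [List.foldl_cons]
    rw [← ih, conj_step_comm Qi (Q j) (p j) (h j)]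

end Aux

private theorem pec_aux (d : ℕ) : ∀ (N : ℕ)
    (Q : Fin N → Matrix (Fin d) (Fin d) ℂ),
    (∀ i, Q i * Q i = 1) →
    (∀ i j, Q i * Q j = Q j * Q i ∨ Q i * Q j = -(Q j * Q i)) →
    ∀ (p : Fin N → ℝ), (∀ i, p i ∈ Set.Ico (0 : ℝ) (1 / 2)) →
    ∀ (γ : Fin N → ℝ), (∀ i, γ i = 1 / (1 - 2 * p i)) →
    ∀ (ρ O : Matrix (Fin d) (Fin d) ℂ),
    ∑ σ ∈ Fintype.piFinset (fun _ : Fin N => ({-1, 1} : Finset ℝ)),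
      ((∏ i, if σ i = 1 then 1 - p i else p i : ℝ) : ℂ) *
      ((∏ i, γ i * σ i : ℝ) : ℂ) *
      (ρ * (List.finRange N).foldl
          (fun A i => if σ i = -1 then Q i * A * Q i else A)
          ((List.finRange N).foldl
            (fun A i => (1 - (p i : ℂ)) • A + (p i : ℂ) • (Q i * A * Q i)) O)).trace
      = (ρ * O).trace := by
  intro N
  induction N with
  | zero =>
    intro Q _ _ p _ γ _ ρ O
    simp
  | succ n ih =>
    intro Q hQ_unit hQ_comm p hp γ hγ ρ O
    rw [sum_piFinset_succ]
    have hp0 : (1 : ℝ) - 2 * p 0 ≠ 0 := by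
      have := (hp 0).2; intro h; nlinarith
    have hγ0 : (γ 0 : ℝ) * (1 - 2 * p 0) = 1 := by
      rw [hγ 0]; field_simp
    set M : Matrix (Fin d) (Fin d) ℂ :=
      (1 - (p 0 : ℂ)) • O + (p 0 : ℂ) • (Q 0 * O * Q 0) with hM
    have key : ∀ s ∈ ({-1, 1} : Finset ℝ),
        (∑ τ ∈ Fintype.piFinset (fun _ : Fin n => ({-1, 1} : Finset ℝ)),
          ((∏ i, if (Fin.cons s τ : Fin (n+1) → ℝ) i = 1 then 1 - p i else p i : ℝ) : ℂ) *
          ((∏ i, γ i * (Fin.cons s τ : Fin (n+1) → ℝ) i : ℝ) : ℂ) *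
          (ρ * (List.finRange (n+1)).foldl
              (fun A i => if (Fin.cons s τ : Fin (n+1) → ℝ) i = -1 then Q i * A * Q i else A)
              ((List.finRange (n+1)).foldl
                (fun A i => (1 - (p i : ℂ)) • A + (p i : ℂ) • (Q i * A * Q i)) O)).trace)
        = (((if s = 1 then 1 - p 0 else p 0) * (γ 0 * s) : ℝ) : ℂ) *
          (ρ * (if s = -1 then Q 0 * M * Q 0 else M)).trace := by
      intro s _
      have hswap : ((List.finRange n).foldl
            (fun A i => (1 - (p i.succ : ℂ)) • A + (p i.succ : ℂ) • (Q i.succ * A * Q i.succ))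
            (if s = -1 then Q 0 * M * Q 0 else M))
          = (if s = -1
              then Q 0 * ((List.finRange n).foldl
                (fun A i => (1 - (p i.succ : ℂ)) • A + (p i.succ : ℂ) • (Q i.succ * A * Q i.succ))
                M) * Q 0
              else ((List.finRange n).foldl
                (fun A i => (1 - (p i.succ : ℂ)) • A + (p i.succ : ℂ) • (Q i.succ * A * Q i.succ))
                M)) := by
        split_ifs with h
        · exact conj_foldl_comm (fun i => Q i.succ) (fun i => p i.succ) (Q 0)
            (fun j => hQ_comm 0 j.succ) (List.finRange n) M
        · rfl
      have ihn := ih (fun i => Q i.succ) (fun i => hQ_unit i.succ)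
        (fun i j => hQ_comm i.succ j.succ) (fun i => p i.succ) (fun i => hp i.succ)
        (fun i => γ i.succ) (fun i => hγ i.succ) ρ (if s = -1 then Q 0 * M * Q 0 else M)
      calc (∑ τ ∈ Fintype.piFinset (fun _ : Fin n => ({-1, 1} : Finset ℝ)),
          ((∏ i, if (Fin.cons s τ : Fin (n+1) → ℝ) i = 1 then 1 - p i else p i : ℝ) : ℂ) *
          ((∏ i, γ i * (Fin.cons s τ : Fin (n+1) → ℝ) i : ℝ) : ℂ) *
          (ρ * (List.finRange (n+1)).foldl
              (fun A i => if (Fin.cons s τ : Fin (n+1) → ℝ) i = -1 then Q i * A * Q i else A)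
              ((List.finRange (n+1)).foldl
                (fun A i => (1 - (p i : ℂ)) • A + (p i : ℂ) • (Q i * A * Q i)) O)).trace)
          = (((if s = 1 then 1 - p 0 else p 0) * (γ 0 * s) : ℝ) : ℂ) *
            ∑ τ ∈ Fintype.piFinset (fun _ : Fin n => ({-1, 1} : Finset ℝ)),
            ((∏ i, if τ i = 1 then 1 - p i.succ else p i.succ : ℝ) : ℂ) *
            ((∏ i, γ i.succ * τ i : ℝ) : ℂ) *
            (ρ * (List.finRange n).foldl
                (fun A i => if τ i = -1 then Q i.succ * A * Q i.succ else A)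
                ((List.finRange n).foldl
                  (fun A i => (1 - (p i.succ : ℂ)) • A + (p i.succ : ℂ) • (Q i.succ * A * Q i.succ))
                  (if s = -1 then Q 0 * M * Q 0 else M))).trace := by
            rw [Finset.mul_sum]
            refine Finset.sum_congr rfl fun τ _ => ?_
            simp only [List.finRange_succ, List.foldl_cons, List.foldl_map,
              Fin.prod_univ_succ, Fin.cons_zero, Fin.cons_succ, ← hM, hswap]
            push_cast
            ring
        _ = (((if s = 1 then 1 - p 0 else p 0) * (γ 0 * s) : ℝ) : ℂ) *
            (ρ * (if s = -1 then Q 0 * M * Q 0 else M)).trace := by rw [ihn]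
    rw [Finset.sum_congr rfl key, Finset.sum_pair (by norm_num : (-1 : ℝ) ≠ 1)]
    have hQ0 : Q 0 * M * Q 0 = (1 - (p 0 : ℂ)) • (Q 0 * O * Q 0) + (p 0 : ℂ) • O := by
      rw [hM]
      have : Q 0 * (Q 0 * O * Q 0) * Q 0 = (Q 0 * Q 0) * O * (Q 0 * Q 0) := by noncomm_ring
      rw [Matrix.mul_add, Matrix.add_mul, Matrix.mul_smul, Matrix.mul_smul, Matrix.smul_mul,
        Matrix.smul_mul, this, hQ_unit 0, one_mul, mul_one]
    simp only [if_neg (by norm_num : (-1 : ℝ) ≠ 1), if_pos rfl, hQ0,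
      if_neg (by norm_num : (1 : ℝ) ≠ -1), if_true]
    simp only [hM]
    have expand : ∀ (a b : ℂ) (X Y : Matrix (Fin d) (Fin d) ℂ),
        (ρ * (a • X + b • Y)).trace = a * (ρ * X).trace + b * (ρ * Y).trace := by
      intro a b X Y
      rw [Matrix.mul_add, Matrix.mul_smul, Matrix.mul_smul, trace_add, trace_smul, trace_smul]
      rfl
    rw [expand, expand]
    have hγ0' : (γ 0 : ℂ) * (1 - 2 * (p 0 : ℂ)) = 1 := by
      calc (γ 0 : ℂ) * (1 - 2 * (p 0 : ℂ)) = ((γ 0 * (1 - 2 * p 0) : ℝ) : ℂ) := by push_cast; ring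
        _ = 1 := by rw [hγ0]; norm_num
    push_cast
    linear_combination hγ0' * (ρ * O).trace

/-- **Probabilistic error cancellation is unbiased.**
Let `Q 1, …, Q N` be Hermitian unitary `d×d` complex matrices which pairwise commute
or anticommute, `p i ∈ [0, 1/2)`, `γ i = 1/(1 − 2 p i)`, and `ρ, O` arbitrary `d×d`
complex matrices.  For `σ ∈ {−1, +1}^N` let `w σ = ∏ i, w_i (σ i)` with
`w_i (+1) = 1 − p i` and `w_i (−1) = p i`, let `C_σ` compose the conjugations
`A ↦ Q i A Q i` over the `i` with `σ i = −1` (in increasing `i`), and let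
`𝒩 = N_{Q N, p N} ∘ ⋯ ∘ N_{Q 1, p 1}`.  Then
`∑_σ w σ (∏ i, γ i σ i) Tr(ρ C_σ(𝒩 O)) = Tr(ρ O)`. -/
theorem pec_estimator_unbiased (d N : ℕ)
    (Q : Fin N → Matrix (Fin d) (Fin d) ℂ)
    (hQ_herm : ∀ i, (Q i)ᴴ = Q i) (hQ_unit : ∀ i, Q i * Q i = 1)
    (hQ_comm : ∀ i j, Q i * Q j = Q j * Q i ∨ Q i * Q j = -(Q j * Q i))
    (p : Fin N → ℝ) (hp : ∀ i, p i ∈ Set.Ico (0 : ℝ) (1 / 2))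
    (γ : Fin N → ℝ) (hγ : ∀ i, γ i = 1 / (1 - 2 * p i))
    (ρ O : Matrix (Fin d) (Fin d) ℂ) :
    ∑ σ ∈ Fintype.piFinset (fun _ : Fin N => ({-1, 1} : Finset ℝ)),
      ((∏ i, if σ i = 1 then 1 - p i else p i : ℝ) : ℂ) *
      ((∏ i, γ i * σ i : ℝ) : ℂ) *
      (ρ * (List.finRange N).foldl
          (fun A i => if σ i = -1 then Q i * A * Q i else A)
          ((List.finRange N).foldl
            (fun A i => (1 - (p i : ℂ)) • A + (p i : ℂ) • (Q i * A * Q i)) O)).trace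
      = (ρ * O).trace := by
  exact pec_aux d N Q hQ_unit hQ_comm p hp γ hγ ρ O
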